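/- arXiv:2302.12537 — 5 statements merged into one kernel-verified Lean document; each statement's English description precedes it below -/
import Mathlib

section
/- Let δ : E × E → E be continuously differentiable, let ω⋆ ∈ E satisfy δ(ω⋆, ω⋆) = 0, let ω̄ ∈ E be arbitrary, and let ω̄⋆ ∈ E satisfy δ(ω̄⋆, ω̄) = 0. Then the path-mean Hessian and path-mean target Jacobian satisfy the exact identity H̄(ω̄⋆, ω⋆; ω̄) (ω̄⋆ − ω⋆) = J̄_δ(ω̄, ω⋆; ω⋆) (ω̄ − ω⋆). Consequently, if the continuous linear map H̄(ω̄⋆, ω⋆; ω̄) is invertible, then ω̄⋆ − ω⋆ = H̄(ω̄⋆, ω⋆; ω̄)⁻¹ (J̄_δ(ω̄, ω⋆; ω⋆) (ω̄ − ω⋆)). -/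
open MeasureTheory intervalIntegral

noncomputable section

abbrev E (n : ℕ) := EuclideanSpace ℝ (Fin n)

/-- Partial Fréchet derivative of `δ` w.r.t. its first argument. -/
noncomputable def D1 {n : ℕ} (δ : E n × E n → E n) (a b : E n) : E n →L[ℝ] E n :=
  fderiv ℝ (fun x => δ (x, b)) a

/-- Partial Fréchet derivative of `δ` w.r.t. its second argument. -/
noncomputable def D2 {n : ℕ} (δ : E n × E n → E n) (a b : E n) : E n →L[ℝ] E n :=
  fderiv ℝ (fun y => δ (a, y)) b

/-- Path-mean Hessian `H̄(ω, ω⋆; ω̄) = −∫₀¹ D₁δ(ω − t(ω − ω⋆), ω̄) dt`. -/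
noncomputable def Hbar {n : ℕ} (δ : E n × E n → E n) (ω ωs ωbar : E n) : E n →L[ℝ] E n :=
  -∫ t in (0:ℝ)..1, D1 δ (ω - t • (ω - ωs)) ωbar

/-- Path-mean target Jacobian `J̄_δ(ω, ω⋆; ω̄) = ∫₀¹ D₂δ(ω̄, ω − t(ω − ω⋆)) dt`. -/
noncomputable def Jbar {n : ℕ} (δ : E n × E n → E n) (ω ωs ωbar : E n) : E n →L[ℝ] E n :=
  ∫ t in (0:ℝ)..1, D2 δ ωbar (ω - t • (ω - ωs))

lemma D1_eq {n : ℕ} {δ : E n × E n → E n} (hδ : ContDiff ℝ 1 δ) (a b : E n) :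
    D1 δ a b = (fderiv ℝ δ (a, b)).comp (ContinuousLinearMap.inl ℝ (E n) (E n)) := by
  have hd : HasFDerivAt δ (fderiv ℝ δ (a, b)) (a, b) :=
    (hδ.differentiable one_ne_zero (a, b)).hasFDerivAt
  have hcurve : HasFDerivAt (fun x : E n => (x, b))
      (ContinuousLinearMap.inl ℝ (E n) (E n)) a := by
    exact (hasFDerivAt_id a).prodMk (hasFDerivAt_const b a)
  exact (hd.comp a hcurve).fderiv

lemma D2_eq {n : ℕ} {δ : E n × E n → E n} (hδ : ContDiff ℝ 1 δ) (a b : E n) :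
    D2 δ a b = (fderiv ℝ δ (a, b)).comp (ContinuousLinearMap.inr ℝ (E n) (E n)) := by
  have hd : HasFDerivAt δ (fderiv ℝ δ (a, b)) (a, b) :=
    (hδ.differentiable one_ne_zero (a, b)).hasFDerivAt
  have hcurve : HasFDerivAt (fun y : E n => (a, y))
      (ContinuousLinearMap.inr ℝ (E n) (E n)) b := by
    exact (hasFDerivAt_const a b).prodMk (hasFDerivAt_id b)
  exact (hd.comp b hcurve).fderiv

/-- one step of fitted policy evaluation, Lemma A.1 of the paper:
if `δ(ω⋆, ω⋆) = 0` and `δ(ω̄⋆, ω̄) = 0` then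
`H̄(ω̄⋆, ω⋆; ω̄) (ω̄⋆ − ω⋆) = J̄_δ(ω̄, ω⋆; ω⋆) (ω̄ − ω⋆)`, and whenever
`H̄(ω̄⋆, ω⋆; ω̄)` is invertible (as a continuous linear equivalence `Φ`),
`ω̄⋆ − ω⋆ = H̄(ω̄⋆, ω⋆; ω̄)⁻¹ (J̄_δ(ω̄, ω⋆; ω⋆) (ω̄ − ω⋆))`. -/
theorem fpe_one_step {n : ℕ} (δ : E n × E n → E n) (hδ : ContDiff ℝ 1 δ)
    (ωs ωbar ωbars : E n) (hfix : δ (ωs, ωs) = 0) (hfit : δ (ωbars, ωbar) = 0) :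
    Hbar δ ωbars ωs ωbar (ωbars - ωs) = Jbar δ ωbar ωs ωs (ωbar - ωs) ∧
      ∀ Φ : E n ≃L[ℝ] E n, (Φ : E n →L[ℝ] E n) = Hbar δ ωbars ωs ωbar →
        ωbars - ωs = Φ.symm (Jbar δ ωbar ωs ωs (ωbar - ωs)) := by
  have hdiff := hδ.differentiable one_ne_zero
  have hDcont : Continuous (fun p => fderiv ℝ δ p) := (contDiff_one_iff_fderiv.mp hδ).2
  set v := ωbars - ωs with hv
  set w := ωbar - ωs with hw
  -- continuity of paths
  have hpath1 : Continuous fun t : ℝ => ωbars - t • v :=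
    continuous_const.sub (continuous_id.smul continuous_const)
  have hpath2 : Continuous fun t : ℝ => ωbar - t • w :=
    continuous_const.sub (continuous_id.smul continuous_const)
  -- continuity of integrands (operator-valued)
  have hc1 : Continuous fun t : ℝ => D1 δ (ωbars - t • v) ωbar := by
    have : (fun t : ℝ => D1 δ (ωbars - t • v) ωbar)
        = fun t => (fderiv ℝ δ (ωbars - t • v, ωbar)).comp
            (ContinuousLinearMap.inl ℝ (E n) (E n)) := by
      funext t; exact D1_eq hδ _ _
    rw [this]
    exact (hDcont.comp (hpath1.prodMk continuous_const)).clm_comp continuous_const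
  have hc2 : Continuous fun t : ℝ => D2 δ ωs (ωbar - t • w) := by
    have : (fun t : ℝ => D2 δ ωs (ωbar - t • w))
        = fun t => (fderiv ℝ δ (ωs, ωbar - t • w)).comp
            (ContinuousLinearMap.inr ℝ (E n) (E n)) := by
      funext t; exact D2_eq hδ _ _
    rw [this]
    exact (hDcont.comp (continuous_const.prodMk hpath2)).clm_comp continuous_const
  have hi1 : IntervalIntegrable (fun t : ℝ => D1 δ (ωbars - t • v) ωbar) volume 0 1 :=
    hc1.intervalIntegrable 0 1
  have hi2 : IntervalIntegrable (fun t : ℝ => D2 δ ωs (ωbar - t • w)) volume 0 1 :=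
    hc2.intervalIntegrable 0 1
  -- FTC along the first path
  have hderiv1 : ∀ t ∈ Set.uIcc (0:ℝ) 1,
      HasDerivAt (fun t : ℝ => δ (ωbars - t • v, ωbar))
        (-(D1 δ (ωbars - t • v) ωbar v)) t := by
    intro t _
    have hcurve : HasDerivAt (fun t : ℝ => (ωbars - t • v, ωbar)) (-v, (0 : E n)) t := by
      simpa using
        ((((hasDerivAt_id t).smul_const v).const_sub ωbars).prodMk (hasDerivAt_const t ωbar))
    have hd : HasFDerivAt δ (fderiv ℝ δ (ωbars - t • v, ωbar)) (ωbars - t • v, ωbar) :=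
      (hdiff _).hasFDerivAt
    have h := hd.comp_hasDerivAt t hcurve
    refine h.congr_deriv ?_
    rw [D1_eq hδ]
    simp [ContinuousLinearMap.comp_apply]
    rw [show ((-v, (0 : E n)) : E n × E n) = -(v, (0 : E n)) by simp [Prod.neg_mk],
      map_neg]
  have hint1 : (∫ t in (0:ℝ)..1, -(D1 δ (ωbars - t • v) ωbar v))
      = δ (ωbars - (1:ℝ) • v, ωbar) - δ (ωbars - (0:ℝ) • v, ωbar) := by
    apply intervalIntegral.integral_eq_sub_of_hasDerivAt hderiv1
    exact ((hc1.clm_apply continuous_const).neg).intervalIntegrable 0 1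
  have e1 : Hbar δ ωbars ωs ωbar v = δ (ωs, ωbar) := by
    have h0 : ωbars - (1:ℝ) • v = ωs := by simp [hv]
    have h1 : ωbars - (0:ℝ) • v = ωbars := by simp
    rw [h0, h1, hfit, sub_zero, intervalIntegral.integral_neg] at hint1
    rw [Hbar, ContinuousLinearMap.neg_apply, ContinuousLinearMap.intervalIntegral_apply hi1]
    rw [← hint1]
  -- FTC along the second path
  have hderiv2 : ∀ t ∈ Set.uIcc (0:ℝ) 1,
      HasDerivAt (fun t : ℝ => δ (ωs, ωbar - t • w))
        (-(D2 δ ωs (ωbar - t • w) w)) t := by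
    intro t _
    have hcurve : HasDerivAt (fun t : ℝ => (ωs, ωbar - t • w)) ((0 : E n), -w) t := by
      simpa using
        ((hasDerivAt_const t ωs).prodMk (((hasDerivAt_id t).smul_const w).const_sub ωbar))
    have hd : HasFDerivAt δ (fderiv ℝ δ (ωs, ωbar - t • w)) (ωs, ωbar - t • w) :=
      (hdiff _).hasFDerivAt
    have h := hd.comp_hasDerivAt t hcurve
    refine h.congr_deriv ?_
    rw [D2_eq hδ]
    simp [ContinuousLinearMap.comp_apply]
    rw [show (((0 : E n), -w) : E n × E n) = -((0 : E n), w) by simp [Prod.neg_mk],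
      map_neg]
  have hint2 : (∫ t in (0:ℝ)..1, -(D2 δ ωs (ωbar - t • w) w))
      = δ (ωs, ωbar - (1:ℝ) • w) - δ (ωs, ωbar - (0:ℝ) • w) := by
    apply intervalIntegral.integral_eq_sub_of_hasDerivAt hderiv2
    exact ((hc2.clm_apply continuous_const).neg).intervalIntegrable 0 1
  have e2 : Jbar δ ωbar ωs ωs w = δ (ωs, ωbar) := by
    have h0 : ωbar - (1:ℝ) • w = ωs := by simp [hw]
    have h1 : ωbar - (0:ℝ) • w = ωbar := by simp
    rw [h0, h1, hfix, intervalIntegral.integral_neg, zero_sub, neg_eq_iff_eq_neg, neg_neg] at hint2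
    rw [Jbar, ContinuousLinearMap.intervalIntegral_apply hi2, hint2]
  have key : Hbar δ ωbars ωs ωbar (ωbars - ωs) = Jbar δ ωbar ωs ωs (ωbar - ωs) := by
    rw [← hv, ← hw, e1, e2]
  refine ⟨key, ?_⟩
  intro Φ hΦ
  have : Φ (ωbars - ωs) = Jbar δ ωbar ωs ωs (ωbar - ωs) := by
    rw [← key, ← hΦ]; rfl
  rw [← this, ContinuousLinearEquiv.symm_apply_apply]

end
end

section
/- Let g : E → E be continuously differentiable with g(ω⋆) = 0 for some ω⋆ ∈ E, and suppose that for every t ∈ [0,1] and every nonzero v ∈ E, ⟨v, Dg(ω − t(ω − ω⋆)) v⟩ < 0 (the Fréchet derivative of g is negative definite at every point of the segment joining ω to ω⋆). Then for every ω ≠ ω⋆, ⟨ω − ω⋆, g(ω)⟩ < 0; equivalently, the candidate Lyapunov function V(ω) = ½‖ω − ω⋆‖² satisfies ∇V(ω)ᵀ g(ω) < 0. -/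
open scoped RealInnerProductSpace

/-- Lyapunov condition (c) in the proof of Theorem 2: if
`g` is continuously differentiable with `g(ω⋆) = 0` and the Fréchet derivative of `g`
is negative definite at every point of the segment joining `ω` to `ω⋆`
(for every `ω`), then `⟨ω − ω⋆, g(ω)⟩ < 0` for every `ω ≠ ω⋆`, i.e. the candidate
Lyapunov function `V(ω) = ½‖ω − ω⋆‖²` satisfies `∇V(ω)ᵀ g(ω) < 0`. -/
theorem lyapunov_negative {n : ℕ}
    (g : EuclideanSpace ℝ (Fin n) → EuclideanSpace ℝ (Fin n))
    (hg : ContDiff ℝ 1 g) (ωs : EuclideanSpace ℝ (Fin n)) (hfix : g ωs = 0)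
    (hneg : ∀ ω : EuclideanSpace ℝ (Fin n), ∀ t ∈ Set.Icc (0:ℝ) 1,
      ∀ v : EuclideanSpace ℝ (Fin n), v ≠ 0 →
        ⟪v, fderiv ℝ g (ω - t • (ω - ωs)) v⟫ < 0) :
    ∀ ω : EuclideanSpace ℝ (Fin n), ω ≠ ωs → ⟪ω - ωs, g ω⟫ < 0 := by
  intro ω hω
  set v : EuclideanSpace ℝ (Fin n) := ω - ωs with hv
  have hvne : v ≠ 0 := sub_ne_zero.mpr hω
  set h : ℝ → ℝ := fun t => ⟪v, g (ω - t • v)⟫ with hh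
  have hderiv : ∀ t : ℝ, HasDerivAt h (-⟪v, fderiv ℝ g (ω - t • v) v⟫) t := by
    intro t
    have hc : HasDerivAt (fun t : ℝ => ω - t • v) (-v) t := by
      simpa using ((hasDerivAt_id t).smul_const v).const_sub ω
    have hgd : HasFDerivAt g (fderiv ℝ g (ω - t • v)) (ω - t • v) :=
      (hg.differentiable one_ne_zero (ω - t • v)).hasFDerivAt
    have hcomp := hgd.comp_hasDerivAt t hc
    have := ((innerSL ℝ v).hasFDerivAt.comp_hasDerivAt t hcomp)
    simpa [innerSL_apply_apply, inner_neg_right, Function.comp_def] using this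
  have hmono : StrictMonoOn h (Set.Icc (0:ℝ) 1) := by
    apply strictMonoOn_of_deriv_pos (convex_Icc 0 1)
    · exact (Continuous.inner continuous_const
        (hg.continuous.comp (continuous_const.sub (continuous_id.smul continuous_const)))).continuousOn
    · intro t ht
      rw [(hderiv t).deriv]
      have ht' : t ∈ Set.Icc (0:ℝ) 1 := Set.mem_of_mem_of_subset ht
        (interior_subset)
      linarith [hneg ω t ht' v hvne]
  have h1 : h 1 = 0 := by simp [hh, hv, hfix]
  have h0 : h 0 = ⟪ω - ωs, g ω⟫ := by simp [hh, hv]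
  have := hmono (Set.left_mem_Icc.mpr one_pos.le) (Set.right_mem_Icc.mpr one_pos.le)
    one_pos
  rw [h1, h0] at this
  exact this
end

section
/- Let (Ω, F, P) be a probability space, S a measurable space, ς : Ω → S a random element, and δ̂ : E × E × S → E measurable such that for fixed a, b ∈ E the map s ↦ δ̂(a, b, s) is square-integrable with mean δ(a, b) := E[δ̂(a, b, ς)] and E[‖δ̂(a, b, ς) − δ(a, b)‖²] ≤ σ². Let δ : E × E → E be continuously differentiable, let ω̄⋆ satisfy δ(ω̄⋆, ω̄) = 0, let α > 0, and suppose ‖Id − α·H̄(ω, ω̄⋆; ω̄)‖ ≤ ρ in operator norm. Then for every ω⋆ ∈ E, E[‖ω + α·δ̂(ω, ω̄, ς) − ω⋆‖] ≤ ρ·‖ω − ω̄⋆‖ + ‖ω̄⋆ − ω⋆‖ + α·σ. -/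
open MeasureTheory intervalIntegral

noncomputable section

lemma hbar_apply {n : ℕ} {δ : E n × E n → E n} (hδ : ContDiff ℝ 1 δ) (ω ωs b : E n) :
    Hbar δ ω ωs b (ω - ωs) = δ (ωs, b) - δ (ω, b) := by
  set v := ω - ωs with hv
  have hdiff := hδ.differentiable one_ne_zero
  have hD1 : ∀ a : E n, HasFDerivAt (fun x => δ (x, b)) (D1 δ a b) a := by
    intro a
    exact ((hdiff (a, b)).comp a (differentiableAt_id.prodMk (differentiableAt_const b))).hasFDerivAt
  have hcont : Continuous fun a : E n => D1 δ a b := by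
    have heq : ∀ a : E n, D1 δ a b =
        (fderiv ℝ δ (a, b)).comp ((ContinuousLinearMap.id ℝ (E n)).prod 0) := by
      intro a
      have h1 : HasFDerivAt (fun x : E n => (x, b))
          ((ContinuousLinearMap.id ℝ (E n)).prod 0) a :=
        (hasFDerivAt_id a).prodMk (hasFDerivAt_const b a)
      have h2 := ((hdiff (a, b)).hasFDerivAt).comp a h1
      exact (hD1 a).unique h2
    simp_rw [heq]
    exact ((hδ.continuous_fderiv one_ne_zero).comp
      (continuous_id.prodMk continuous_const)).clm_comp continuous_const
  have hp : ∀ t : ℝ, HasDerivAt (fun t : ℝ => ω - t • v) (-v) t := by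
    intro t
    simpa using ((hasDerivAt_id t).smul_const v).const_sub ω
  have hg : ∀ t : ℝ, HasDerivAt (fun t : ℝ => δ (ω - t • v, b))
      (D1 δ (ω - t • v) b (-v)) t := by
    intro t
    exact (hD1 (ω - t • v)).comp_hasDerivAt t (hp t)
  have hcontφ : Continuous fun t : ℝ => D1 δ (ω - t • v) b :=
    hcont.comp (continuous_const.sub (continuous_id.smul continuous_const))
  have hInt : IntervalIntegrable (fun t : ℝ => D1 δ (ω - t • v) b) volume 0 1 :=
    hcontφ.intervalIntegrable 0 1
  have hInt' : IntervalIntegrable (fun t : ℝ => D1 δ (ω - t • v) b (-v)) volume 0 1 :=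
    (hcontφ.clm_apply continuous_const).intervalIntegrable 0 1
  have hftc : ∫ t in (0:ℝ)..1, D1 δ (ω - t • v) b (-v) =
      δ (ω - (1:ℝ) • v, b) - δ (ω - (0:ℝ) • v, b) :=
    integral_eq_sub_of_hasDerivAt (fun t _ => hg t) hInt'
  have happly : (∫ t in (0:ℝ)..1, D1 δ (ω - t • v) b) (-v) =
      ∫ t in (0:ℝ)..1, D1 δ (ω - t • v) b (-v) :=
    ContinuousLinearMap.intervalIntegral_apply hInt (-v)
  have : (∫ t in (0:ℝ)..1, D1 δ (ω - t • v) b) (-v) = δ (ωs, b) - δ (ω, b) := by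
    rw [happly, hftc]
    have h1 : ω - (1:ℝ) • v = ωs := by simp [hv]
    have h0 : ω - (0:ℝ) • v = ω := by simp
    rw [h1, h0]
  have h2 := this
  rw [map_neg, neg_eq_iff_eq_neg] at h2
  show (-∫ t in (0:ℝ)..1, D1 δ (ω - t • v) b) v = _
  rw [ContinuousLinearMap.neg_apply, h2, neg_neg]


/-- Lemma B.4 of the paper, the one-step stochastic PFPE bound:
with `δ(a,b) = E[δ̂(a, b, ς)]`, variance bounded by `σ²`, `δ(ω̄⋆, ω̄) = 0`, and
`‖Id − α·H̄(ω, ω̄⋆; ω̄)‖ ≤ ρ`, we have for every `ω⋆`,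
`E[‖ω + α·δ̂(ω, ω̄, ς) − ω⋆‖] ≤ ρ·‖ω − ω̄⋆‖ + ‖ω̄⋆ − ω⋆‖ + α·σ`. -/
theorem one_step_stochastic_bound {n : ℕ} {Ω S : Type*}
    [MeasurableSpace Ω] [MeasurableSpace S]
    (P : Measure Ω) [IsProbabilityMeasure P]
    (ς : Ω → S) (hς : Measurable ς)
    (δhat : E n → E n → S → E n)
    (δ : E n × E n → E n) (hδ : ContDiff ℝ 1 δ)
    (hL2 : ∀ a b : E n, MemLp (fun x => δhat a b (ς x)) 2 P)
    (hmean : ∀ a b : E n, δ (a, b) = ∫ x, δhat a b (ς x) ∂P)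
    (σ : ℝ) (hσ : 0 ≤ σ)
    (hvar : ∀ a b : E n, ∫ x, ‖δhat a b (ς x) - δ (a, b)‖ ^ 2 ∂P ≤ σ ^ 2)
    (ωbar ωbars : E n) (hfit : δ (ωbars, ωbar) = 0)
    (α : ℝ) (hα : 0 < α)
    (ω : E n) (ρ : ℝ)
    (hop : ‖ContinuousLinearMap.id ℝ (E n) - α • Hbar δ ω ωbars ωbar‖ ≤ ρ) :
    ∀ ωs : E n,
      ∫ x, ‖ω + α • δhat ω ωbar (ς x) - ωs‖ ∂P ≤
        ρ * ‖ω - ωbars‖ + ‖ωbars - ωs‖ + α * σ := by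
  intro ωs
  have hkey : Hbar δ ω ωbars ωbar (ω - ωbars) = -δ (ω, ωbar) := by
    rw [hbar_apply hδ ω ωbars ωbar, hfit, zero_sub]
  set v := ω - ωbars with hv
  set A := (ContinuousLinearMap.id ℝ (E n) - α • Hbar δ ω ωbars ωbar) v with hA
  set Y := fun x => δhat ω ωbar (ς x) - δ (ω, ωbar) with hY
  have hY2 : MemLp Y 2 P := (hL2 ω ωbar).sub (memLp_const _)
  have hY1 : Integrable Y P := hY2.integrable (by norm_num)
  have hYn : Integrable (fun x => ‖Y x‖) P := hY1.norm
  have hAval : A = v + α • δ (ω, ωbar) := by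
    simp [hA, ContinuousLinearMap.sub_apply, ContinuousLinearMap.smul_apply, hkey,
      sub_neg_eq_add]
  have hdecomp : ∀ x, ω + α • δhat ω ωbar (ς x) - ωs =
      A + α • Y x + (ωbars - ωs) := by
    intro x
    rw [hAval, hY, smul_sub, hv]
    abel
  have hintR : Integrable (fun x => ‖A‖ + α * ‖Y x‖ + ‖ωbars - ωs‖) P :=
    ((integrable_const _).add (hYn.const_mul α)).add (integrable_const _)
  have hintL : Integrable (fun x => ‖ω + α • δhat ω ωbar (ς x) - ωs‖) P := by
    have : Integrable (fun x => A + α • Y x + (ωbars - ωs)) P :=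
      ((integrable_const A).add (hY1.smul α)).add (integrable_const _)
    simpa only [← hdecomp] using this.norm
  have hEY : ∫ x, ‖Y x‖ ∂P ≤ σ := by
    have hconj : Real.HolderConjugate 2 2 := Real.holderConjugate_iff.mpr ⟨one_lt_two, by norm_num⟩
    have hf2 : MemLp (fun x => ‖Y x‖) (ENNReal.ofReal 2) P := by
      simpa [ENNReal.ofReal_ofNat] using hY2.norm
    have hg2 : MemLp (fun _ : Ω => (1 : ℝ)) (ENNReal.ofReal 2) P := memLp_const _
    have h := integral_mul_le_Lp_mul_Lq_of_nonneg hconj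
      (Filter.Eventually.of_forall fun x => norm_nonneg (Y x))
      (Filter.Eventually.of_forall fun _ => zero_le_one) hf2 hg2
    simp only [mul_one, Real.one_rpow] at h
    have hone : (∫ _ : Ω, (1:ℝ) ∂P) = 1 := by simp
    rw [hone, Real.one_rpow, mul_one] at h
    have hpow : ∫ x, ‖Y x‖ ^ (2:ℝ) ∂P = ∫ x, ‖Y x‖ ^ 2 ∂P := by
      congr 1; funext x
      rw [show ((2:ℝ)) = ((2:ℕ):ℝ) by norm_num, Real.rpow_natCast]
    rw [hpow] at h
    refine h.trans ?_
    have h1 : (∫ x, ‖Y x‖ ^ 2 ∂P) ^ ((1:ℝ)/2) ≤ (σ ^ 2) ^ ((1:ℝ)/2) :=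
      Real.rpow_le_rpow (integral_nonneg fun x => by positivity) (hvar ω ωbar) (by norm_num)
    refine h1.trans_eq ?_
    rw [← Real.rpow_natCast σ 2, ← Real.rpow_mul hσ]
    norm_num
  have hnormA : ‖A‖ ≤ ρ * ‖v‖ := by
    refine (ContinuousLinearMap.le_opNorm _ v).trans ?_
    exact mul_le_mul_of_nonneg_right hop (norm_nonneg v)
  calc ∫ x, ‖ω + α • δhat ω ωbar (ς x) - ωs‖ ∂P
      ≤ ∫ x, (‖A‖ + α * ‖Y x‖ + ‖ωbars - ωs‖) ∂P := by
        refine integral_mono hintL hintR fun x => ?_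
        rw [hdecomp x]
        refine (norm_add_le _ _).trans ?_
        gcongr
        refine (norm_add_le _ _).trans ?_
        gcongr
        rw [norm_smul, Real.norm_of_nonneg hα.le]
    _ = ‖A‖ + α * ∫ x, ‖Y x‖ ∂P + ‖ωbars - ωs‖ := by
        have hI1 : Integrable (fun x => ‖A‖ + α * ‖Y x‖) P :=
          (integrable_const _).add (hYn.const_mul α)
        rw [integral_add hI1 (integrable_const _),
          integral_add (integrable_const _) (hYn.const_mul α), MeasureTheory.integral_const,
          MeasureTheory.integral_const, MeasureTheory.integral_const_mul]
        simp
    _ ≤ ρ * ‖v‖ + α * σ + ‖ωbars - ωs‖ := by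
        gcongr
    _ = ρ * ‖ω - ωbars‖ + ‖ωbars - ωs‖ + α * σ := by rw [hv]; ring

end
end

section
/- Let (Ω, F, P) be a probability space, S a measurable space, and ς_0, …, ς_{k−1} : Ω → S independent identically distributed random elements with common law ν. Let δ̂ : E × E × S → E be measurable with, for all a, b ∈ E: s ↦ δ̂(a, b, s) square-integrable, δ(a, b) := ∫ δ̂(a, b, s) dν(s), and ∫ ‖δ̂(a, b, s) − δ(a, b)‖² dν(s) ≤ σ². Suppose δ is continuously differentiable. Fix ω̄ ∈ E and define the PFPE iterates ω_0 := ω̄ and ω_{i+1} := ω_i + α·δ̂(ω_i, ω̄, ς_i) for 0 ≤ i ≤ k−1 with stepsize α > 0. Let ω̄⋆ satisfy δ(ω̄⋆, ω̄) = 0 and ω⋆ satisfy δ(ω⋆, ω⋆) = 0, and assume: (i) ‖Id − α·H̄(a, ω̄⋆; ω̄)‖ ≤ ρ for every a ∈ E, and (ii) ‖Id + α·J̄_TD(ω̄, ω⋆)‖ ≤ T. Then for k ≥ 1, E[‖ω_k − ω⋆‖] ≤ ρ^{k−1}·T·‖ω̄ − ω⋆‖ + (1 + ρ^{k−1})·‖ω̄⋆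 − ω⋆‖ + (∑_{i=0}^{k−1} ρ^i)·α·σ. -/
open MeasureTheory intervalIntegral Finset

noncomputable section

/-- Path-mean TD Jacobian `J̄_TD(ω, ω⋆) = ∫₀¹ Dg(ω − t(ω − ω⋆)) dt` for `g(x) = δ(x,x)`. -/
noncomputable def JTD {n : ℕ} (δ : E n × E n → E n) (ω ωs : E n) : E n →L[ℝ] E n :=
  ∫ t in (0:ℝ)..1, fderiv ℝ (fun x => δ (x, x)) (ω - t • (ω - ωs))

/-- Fundamental theorem of calculus along a straight path, for `C¹` maps between
Euclidean spaces, stated with the path-mean derivative as a single operator. -/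
lemma ftc_clm {n : ℕ} (f : E n → E n) (hf : ContDiff ℝ 1 f) (a b : E n) :
    f a - f b = (∫ t in (0:ℝ)..1, fderiv ℝ f (a - t • (a - b))) (a - b) := by
  have hcont : Continuous fun x => fderiv ℝ f x := hf.continuous_fderiv one_ne_zero
  have hpathc : Continuous fun t : ℝ => a - t • (a - b) :=
    continuous_const.sub (continuous_id.smul continuous_const)
  have hFc : Continuous fun t : ℝ => fderiv ℝ f (a - t • (a - b)) := hcont.comp hpathc
  have hpath : ∀ t : ℝ, HasDerivAt (fun t : ℝ => a - t • (a - b)) (-(a - b)) t := by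
    intro t
    simpa using (((hasDerivAt_id t).smul_const (a - b)).const_sub a)
  have hF : ∀ t ∈ Set.uIcc (0:ℝ) 1,
      HasDerivAt (fun t : ℝ => f (a - t • (a - b)))
        ((fderiv ℝ f (a - t • (a - b))) (-(a - b))) t := fun t _ =>
    ((hf.differentiable one_ne_zero _).hasFDerivAt).comp_hasDerivAt t (hpath t)
  have hInt : IntervalIntegrable (fun t : ℝ => (fderiv ℝ f (a - t • (a - b))) (-(a - b)))
      MeasureTheory.volume 0 1 := (hFc.clm_apply continuous_const).intervalIntegrable 0 1
  have h2 : (∫ t in (0:ℝ)..1, (fderiv ℝ f (a - t • (a - b))) (-(a - b)))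
      = f (a - (1:ℝ) • (a - b)) - f (a - (0:ℝ) • (a - b)) :=
    intervalIntegral.integral_eq_sub_of_hasDerivAt hF hInt
  have h1 : (∫ t in (0:ℝ)..1, fderiv ℝ f (a - t • (a - b))) (a - b)
      = ∫ t in (0:ℝ)..1, (fderiv ℝ f (a - t • (a - b))) (a - b) :=
    ContinuousLinearMap.intervalIntegral_apply (hFc.intervalIntegrable 0 1) _
  rw [h1]
  have : (fun t : ℝ => (fderiv ℝ f (a - t • (a - b))) (a - b))
      = fun t : ℝ => -((fderiv ℝ f (a - t • (a - b))) (-(a - b))) := by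
    funext t; simp
  rw [this, intervalIntegral.integral_neg, h2]
  simp

/-- An `L²` bound on the centered noise yields an `L¹` (lower Lebesgue integral) bound. -/
lemma noise_bound {S : Type*} [MeasurableSpace S] (ν : Measure S) [IsProbabilityMeasure ν]
    {n : ℕ} (f : S → E n) (hf2 : MemLp f 2 ν) (σ : ℝ) (hσ : 0 ≤ σ)
    (hvar : ∫ s, ‖f s‖ ^ 2 ∂ν ≤ σ ^ 2) :
    ∫⁻ s, (‖f s‖₊ : ENNReal) ∂ν ≤ ENNReal.ofReal σ := by
  have hint : Integrable (fun s => ‖f s‖ ^ 2) ν := hf2.norm.integrable_sq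
  have h4 : ∫⁻ s, (‖f s‖₊ : ENNReal) ^ (2:ℝ) ∂ν = ENNReal.ofReal (∫ s, ‖f s‖ ^ 2 ∂ν) := by
    rw [ofReal_integral_eq_lintegral_ofReal hint (ae_of_all _ fun s => sq_nonneg _)]
    apply lintegral_congr
    intro s
    rw [show (2:ℝ) = ((2:ℕ):ℝ) by norm_num, ENNReal.rpow_natCast,
      ← enorm_eq_nnnorm, ← ofReal_norm, ← ENNReal.ofReal_pow (norm_nonneg _)]
  have h3 : eLpNorm f 2 ν = (ENNReal.ofReal (∫ s, ‖f s‖ ^ 2 ∂ν)) ^ (1/2 : ℝ) := by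
    rw [eLpNorm_eq_lintegral_rpow_enorm_toReal (by norm_num) (by norm_num), ← h4]
    norm_num
    rfl
  calc ∫⁻ s, (‖f s‖₊ : ENNReal) ∂ν = eLpNorm f 1 ν := by rw [eLpNorm_one_eq_lintegral_enorm]; rfl
    _ ≤ eLpNorm f 2 ν := eLpNorm_le_eLpNorm_of_exponent_le one_le_two hf2.aestronglyMeasurable
    _ = (ENNReal.ofReal (∫ s, ‖f s‖ ^ 2 ∂ν)) ^ (1/2 : ℝ) := h3
    _ ≤ (ENNReal.ofReal (σ ^ 2)) ^ (1/2 : ℝ) :=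
        ENNReal.rpow_le_rpow (ENNReal.ofReal_le_ofReal hvar) (by norm_num)
    _ = ENNReal.ofReal σ := by
        rw [ENNReal.ofReal_pow hσ, ← ENNReal.rpow_natCast, ← ENNReal.rpow_mul]
        norm_num

/-- Theorem 3 of the paper, the finite-time PFPE error bound:
for `k` inner stochastic gradient steps on i.i.d. samples `ς_0, …, ς_{k−1}` with common
law `ν`, PFPE iterates `ω_0 = ω̄`, `ω_{i+1} = ω_i + α·δ̂(ω_i, ω̄, ς_i)`, fitted point
`δ(ω̄⋆, ω̄) = 0`, TD fixed point `δ(ω⋆, ω⋆) = 0`, contraction bounds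
`‖Id − α·H̄(a, ω̄⋆; ω̄)‖ ≤ ρ` (for all `a`) and `‖Id + α·J̄_TD(ω̄, ω⋆)‖ ≤ T`:
`E[‖ω_k − ω⋆‖] ≤ ρ^{k−1}·T·‖ω̄ − ω⋆‖ + (1 + ρ^{k−1})·‖ω̄⋆ − ω⋆‖ + (∑_{i<k} ρ^i)·α·σ`. -/
theorem pfpe_finite_time_bound {n : ℕ} {Ωt S : Type*}
    [MeasurableSpace Ωt] [MeasurableSpace S]
    (P : Measure Ωt) [IsProbabilityMeasure P]
    (ν : Measure S) [IsProbabilityMeasure ν]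
    (ς : ℕ → Ωt → S) (hςmeas : ∀ i, Measurable (ς i))
    (hindep : ProbabilityTheory.iIndepFun ς P)
    (hlaw : ∀ i, Measure.map (ς i) P = ν)
    (δhat : E n → E n → S → E n)
    (hδhatmeas : Measurable (fun p : (E n × E n) × S => δhat p.1.1 p.1.2 p.2))
    (δ : E n × E n → E n) (hδ : ContDiff ℝ 1 δ)
    (hL2 : ∀ a b : E n, MemLp (fun s => δhat a b s) 2 ν)
    (hmean : ∀ a b : E n, δ (a, b) = ∫ s, δhat a b s ∂ν)
    (σ : ℝ) (hσ : 0 ≤ σ)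
    (hvar : ∀ a b : E n, ∫ s, ‖δhat a b s - δ (a, b)‖ ^ 2 ∂ν ≤ σ ^ 2)
    (ωbar ωbars ωs : E n) (hfit : δ (ωbars, ωbar) = 0) (hfix : δ (ωs, ωs) = 0)
    (α : ℝ) (hα : 0 < α)
    (k : ℕ) (hk : 1 ≤ k)
    (ω : ℕ → Ωt → E n) (hω0 : ω 0 = fun _ => ωbar)
    (hωrec : ∀ i : ℕ, i < k →
      ω (i + 1) = fun x => ω i x + α • δhat (ω i x) ωbar (ς i x))
    (ρ T : ℝ)
    (hρ : ∀ a : E n, ‖ContinuousLinearMap.id ℝ (E n) - α • Hbar δ a ωbars ωbar‖ ≤ ρ)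
    (hT : ‖ContinuousLinearMap.id ℝ (E n) + α • JTD δ ωbar ωs‖ ≤ T) :
    ∫ x, ‖ω k x - ωs‖ ∂P ≤
      ρ ^ (k - 1) * T * ‖ωbar - ωs‖ + (1 + ρ ^ (k - 1)) * ‖ωbars - ωs‖ +
        (∑ i ∈ Finset.range k, ρ ^ i) * (α * σ) := by
  have hρ0 : 0 ≤ ρ := le_trans (norm_nonneg _) (hρ 0)
  have hT0 : 0 ≤ T := le_trans (norm_nonneg _) hT
  have hδc : Continuous δ := hδ.continuous
  -- the path-mean representations
  have hHrep : ∀ a : E n, Hbar δ a ωbars ωbar (a - ωbars) = -δ (a, ωbar) := by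
    intro a
    have h := ftc_clm (fun x => δ (x, ωbar)) (hδ.comp (contDiff_id.prodMk contDiff_const)) a ωbars
    rw [hfit, sub_zero] at h
    show (-∫ t in (0:ℝ)..1, D1 δ (a - t • (a - ωbars)) ωbar) (a - ωbars) = -δ (a, ωbar)
    rw [ContinuousLinearMap.neg_apply]
    exact congrArg Neg.neg h.symm
  have hJrep : δ (ωbar, ωbar) = JTD δ ωbar ωs (ωbar - ωs) := by
    have h := ftc_clm (fun x => δ (x, x)) (hδ.comp (contDiff_id.prodMk contDiff_id)) ωbar ωs
    rw [hfix, sub_zero] at h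
    exact h
  -- pointwise step bounds
  have hstep_pt : ∀ (a : E n) (s : S),
      ‖(a + α • δhat a ωbar s) - ωbars‖
        ≤ ρ * ‖a - ωbars‖ + α * ‖δhat a ωbar s - δ (a, ωbar)‖ := by
    intro a s
    have hid : (a + α • δhat a ωbar s) - ωbars
        = (ContinuousLinearMap.id ℝ (E n) - α • Hbar δ a ωbars ωbar) (a - ωbars)
          + α • (δhat a ωbar s - δ (a, ωbar)) := by
      simp only [ContinuousLinearMap.sub_apply, ContinuousLinearMap.smul_apply,
        ContinuousLinearMap.id_apply, hHrep a]
      module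
    rw [hid]
    refine (norm_add_le _ _).trans (add_le_add ?_ ?_)
    · exact (ContinuousLinearMap.le_opNorm _ _).trans
        (mul_le_mul_of_nonneg_right (hρ a) (norm_nonneg _))
    · rw [norm_smul, Real.norm_eq_abs, abs_of_pos hα]
  have hfirst_pt : ∀ s : S,
      ‖(ωbar + α • δhat ωbar ωbar s) - ωbars‖
        ≤ T * ‖ωbar - ωs‖ + ‖ωbars - ωs‖ + α * ‖δhat ωbar ωbar s - δ (ωbar, ωbar)‖ := by
    intro s
    have hid : (ωbar + α • δhat ωbar ωbar s) - ωbars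
        = (ContinuousLinearMap.id ℝ (E n) + α • JTD δ ωbar ωs) (ωbar - ωs) + (ωs - ωbars)
          + α • (δhat ωbar ωbar s - δ (ωbar, ωbar)) := by
      simp only [ContinuousLinearMap.add_apply, ContinuousLinearMap.smul_apply,
        ContinuousLinearMap.id_apply, ← hJrep]
      module
    rw [hid]
    refine (norm_add_le _ _).trans (add_le_add ((norm_add_le _ _).trans (add_le_add ?_ ?_)) ?_)
    · exact (ContinuousLinearMap.le_opNorm _ _).trans
        (mul_le_mul_of_nonneg_right hT (norm_nonneg _))
    · rw [norm_sub_rev]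
    · rw [norm_smul, Real.norm_eq_abs, abs_of_pos hα]
  -- noise bound for fixed first argument
  have hnoise : ∀ a : E n, ∫⁻ s, (‖δhat a ωbar s - δ (a, ωbar)‖₊ : ENNReal) ∂ν
      ≤ ENNReal.ofReal σ := fun a =>
    noise_bound ν _ ((hL2 a ωbar).sub (memLp_const _)) σ hσ (hvar a ωbar)
  -- the iterates are measurable functions of the samples
  have hstruct : ∀ j, j ≤ k → ∃ g : (Fin j → S) → E n,
      Measurable g ∧ ω j = fun x => g (fun l => ς l x) := by
    intro j
    induction j with
    | zero => exact fun _ => ⟨fun _ => ωbar, measurable_const, hω0⟩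
    | succ j ih =>
      intro hjk
      obtain ⟨g, hg, hgeq⟩ := ih (Nat.le_of_succ_le hjk)
      have hGm : Measurable fun v : Fin (j+1) → S => g (fun l => v l.castSucc) :=
        hg.comp (measurable_pi_lambda _ fun l => measurable_pi_apply _)
      refine ⟨fun v => g (fun l => v l.castSucc)
        + α • δhat (g (fun l => v l.castSucc)) ωbar (v (Fin.last j)), ?_, ?_⟩
      · exact hGm.add ((hδhatmeas.comp
          ((hGm.prodMk measurable_const).prodMk (measurable_pi_apply _))).const_smul α)
      · rw [hωrec j (Nat.lt_of_succ_le hjk), hgeq]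
        funext x
        have hc : (fun l : Fin j => ς ((l.castSucc : Fin (j+1)) : ℕ) x)
            = fun l : Fin j => ς l x := by
          funext l; simp
        simp only [hc, Fin.val_last]
  have hmeasω : ∀ j, j ≤ k → Measurable (ω j) := by
    intro j hj
    obtain ⟨g, hg, hgeq⟩ := hstruct j hj
    rw [hgeq]
    exact hg.comp (measurable_pi_lambda _ fun l => hςmeas l)
  -- independence of the iterate from the fresh sample
  have hindepω : ∀ j, j < k → ProbabilityTheory.IndepFun (ω j) (ς j) P := by
    intro j hj
    obtain ⟨g, hg, hgeq⟩ := hstruct j hj.le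
    have hd : Disjoint (Finset.range j) ({j} : Finset ℕ) := by
      simp only [Finset.disjoint_left, Finset.mem_range, Finset.mem_singleton]
      omega
    have hbig := hindep.indepFun_finset (Finset.range j) {j} hd hςmeas
    have hφ : Measurable fun v : ↥(Finset.range j) → S =>
        g (fun l : Fin j => v ⟨(l : ℕ), Finset.mem_range.2 l.isLt⟩) :=
      hg.comp (measurable_pi_lambda _ fun l => measurable_pi_apply _)
    have hψ : Measurable fun v : ↥({j} : Finset ℕ) → S => v ⟨j, Finset.mem_singleton_self j⟩ :=
      measurable_pi_apply _
    have h2 := hbig.comp hφ hψ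
    have hW : ω j = (fun v : ↥(Finset.range j) → S =>
        g (fun l : Fin j => v ⟨(l : ℕ), Finset.mem_range.2 l.isLt⟩))
          ∘ (fun a (i : ↥(Finset.range j)) => ς i a) := by
      rw [hgeq]; rfl
    have hS : ς j = (fun v : ↥({j} : Finset ℕ) → S => v ⟨j, Finset.mem_singleton_self j⟩)
        ∘ (fun a (i : ↥({j} : Finset ℕ)) => ς i a) := rfl
    rw [hW, hS]
    exact h2
  -- the key lintegral noise bound along the trajectory
  have hkey : ∀ j, j < k →
      ∫⁻ x, (‖δhat (ω j x) ωbar (ς j x) - δ (ω j x, ωbar)‖₊ : ENNReal) ∂P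
        ≤ ENNReal.ofReal σ := by
    intro j hj
    have hX := hmeasω j hj.le
    have hY := hςmeas j
    have h1 : Measurable fun p : E n × S => δhat p.1 ωbar p.2 :=
      hδhatmeas.comp ((measurable_fst.prodMk measurable_const).prodMk measurable_snd)
    have h2 : Measurable fun p : E n × S => δ (p.1, ωbar) :=
      hδc.measurable.comp (measurable_fst.prodMk measurable_const)
    have hFm : Measurable fun p : E n × S =>
        (‖δhat p.1 ωbar p.2 - δ (p.1, ωbar)‖₊ : ENNReal) :=
      (h1.sub h2).nnnorm.coe_nnreal_ennreal
    have hmap : P.map (fun x => (ω j x, ς j x)) = (P.map (ω j)).prod ν := by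
      rw [← hlaw j]
      exact (ProbabilityTheory.indepFun_iff_map_prod_eq_prod_map_map hX.aemeasurable
        hY.aemeasurable).1 (hindepω j hj)
    have : IsProbabilityMeasure (P.map (ω j)) := Measure.isProbabilityMeasure_map hX.aemeasurable
    calc ∫⁻ x, (‖δhat (ω j x) ωbar (ς j x) - δ (ω j x, ωbar)‖₊ : ENNReal) ∂P
        = ∫⁻ p, (‖δhat p.1 ωbar p.2 - δ (p.1, ωbar)‖₊ : ENNReal)
            ∂(P.map fun x => (ω j x, ς j x)) := (lintegral_map hFm (hX.prodMk hY)).symm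
      _ = ∫⁻ p, (‖δhat p.1 ωbar p.2 - δ (p.1, ωbar)‖₊ : ENNReal)
            ∂((P.map (ω j)).prod ν) := by rw [hmap]
      _ = ∫⁻ a, ∫⁻ s, (‖δhat a ωbar s - δ (a, ωbar)‖₊ : ENNReal) ∂ν ∂(P.map (ω j)) :=
            lintegral_prod _ hFm.aemeasurable
      _ ≤ ∫⁻ _, ENNReal.ofReal σ ∂(P.map (ω j)) := lintegral_mono fun a => hnoise a
      _ = ENNReal.ofReal σ := by simp
  -- one-step recursion in expectation
  have hL2step : ∀ j, j < k →
      ∫⁻ x, (‖ω (j+1) x - ωbars‖₊ : ENNReal) ∂P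
        ≤ ENNReal.ofReal ρ * ∫⁻ x, (‖ω j x - ωbars‖₊ : ENNReal) ∂P
          + ENNReal.ofReal (α * σ) := by
    intro j hj
    have hXm := hmeasω j hj.le
    have hZm : Measurable fun x => (‖δhat (ω j x) ωbar (ς j x) - δ (ω j x, ωbar)‖₊ : ENNReal) := by
      have h1 : Measurable fun x => δhat (ω j x) ωbar (ς j x) :=
        hδhatmeas.comp (((hXm.prodMk measurable_const)).prodMk (hςmeas j))
      have h2 : Measurable fun x => δ (ω j x, ωbar) :=
        hδc.measurable.comp (hXm.prodMk measurable_const)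
      exact (h1.sub h2).nnnorm.coe_nnreal_ennreal
    have hWm : Measurable fun x => (ENNReal.ofReal ρ * (‖ω j x - ωbars‖₊ : ENNReal)) :=
      ((hXm.sub measurable_const).nnnorm.coe_nnreal_ennreal).const_mul _
    calc ∫⁻ x, (‖ω (j+1) x - ωbars‖₊ : ENNReal) ∂P
        ≤ ∫⁻ x, (ENNReal.ofReal ρ * (‖ω j x - ωbars‖₊ : ENNReal)
            + ENNReal.ofReal α
              * (‖δhat (ω j x) ωbar (ς j x) - δ (ω j x, ωbar)‖₊ : ENNReal)) ∂P := by
          apply lintegral_mono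
          intro x
          rw [hωrec j hj]
          dsimp only
          rw [← enorm_eq_nnnorm, ← ofReal_norm, ← enorm_eq_nnnorm, ← ofReal_norm,
            ← enorm_eq_nnnorm, ← ofReal_norm, ← ENNReal.ofReal_mul hρ0, ← ENNReal.ofReal_mul hα.le,
            ← ENNReal.ofReal_add (mul_nonneg hρ0 (norm_nonneg _))
              (mul_nonneg hα.le (norm_nonneg _))]
          exact ENNReal.ofReal_le_ofReal (hstep_pt (ω j x) (ς j x))
      _ = ENNReal.ofReal ρ * ∫⁻ x, (‖ω j x - ωbars‖₊ : ENNReal) ∂P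
            + ENNReal.ofReal α
              * ∫⁻ x, (‖δhat (ω j x) ωbar (ς j x) - δ (ω j x, ωbar)‖₊ : ENNReal) ∂P := by
          rw [lintegral_add_left hWm,
            lintegral_const_mul _ ((hXm.sub_const ωbars).nnnorm.coe_nnreal_ennreal),
            lintegral_const_mul _ hZm]
      _ ≤ ENNReal.ofReal ρ * ∫⁻ x, (‖ω j x - ωbars‖₊ : ENNReal) ∂P
            + ENNReal.ofReal α * ENNReal.ofReal σ := by
          gcongr
          exact hkey j hj
      _ = ENNReal.ofReal ρ * ∫⁻ x, (‖ω j x - ωbars‖₊ : ENNReal) ∂P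
            + ENNReal.ofReal (α * σ) := by rw [ENNReal.ofReal_mul hα.le]
  -- the first step
  have hL1 : ∫⁻ x, (‖ω 1 x - ωbars‖₊ : ENNReal) ∂P
      ≤ ENNReal.ofReal (T * ‖ωbar - ωs‖ + ‖ωbars - ωs‖ + α * σ) := by
    have hZm : Measurable fun s : S => (‖δhat ωbar ωbar s - δ (ωbar, ωbar)‖₊ : ENNReal) := by
      have h1 : Measurable fun s : S => δhat ωbar ωbar s :=
        hδhatmeas.comp (measurable_prodMk_left (x := ((ωbar, ωbar) : E n × E n)))
      exact (h1.sub measurable_const).nnnorm.coe_nnreal_ennreal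
    have hZint : ∫⁻ x, (‖δhat ωbar ωbar (ς 0 x) - δ (ωbar, ωbar)‖₊ : ENNReal) ∂P
        ≤ ENNReal.ofReal σ := by
      rw [← lintegral_map hZm (hςmeas 0), hlaw 0]
      exact noise_bound ν _ ((hL2 ωbar ωbar).sub (memLp_const _)) σ hσ (hvar ωbar ωbar)
    calc ∫⁻ x, (‖ω 1 x - ωbars‖₊ : ENNReal) ∂P
        ≤ ∫⁻ x, (ENNReal.ofReal (T * ‖ωbar - ωs‖ + ‖ωbars - ωs‖)
            + ENNReal.ofReal α * (‖δhat ωbar ωbar (ς 0 x) - δ (ωbar, ωbar)‖₊ : ENNReal)) ∂P := by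
          apply lintegral_mono
          intro x
          rw [show (1:ℕ) = 0 + 1 from rfl, hωrec 0 hk, hω0]
          dsimp only
          rw [← enorm_eq_nnnorm, ← ofReal_norm, ← enorm_eq_nnnorm, ← ofReal_norm,
            ← ENNReal.ofReal_mul hα.le,
            ← ENNReal.ofReal_add (by positivity) (mul_nonneg hα.le (norm_nonneg _))]
          exact ENNReal.ofReal_le_ofReal (hfirst_pt (ς 0 x))
      _ = ENNReal.ofReal (T * ‖ωbar - ωs‖ + ‖ωbars - ωs‖)
            + ENNReal.ofReal α
              * ∫⁻ x, (‖δhat ωbar ωbar (ς 0 x) - δ (ωbar, ωbar)‖₊ : ENNReal) ∂P := by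
          have hZm0 : Measurable fun x : Ωt =>
              (‖δhat ωbar ωbar (ς 0 x) - δ (ωbar, ωbar)‖₊ : ENNReal) := hZm.comp (hςmeas 0)
          rw [lintegral_add_left measurable_const, lintegral_const_mul _ hZm0, lintegral_const]
          simp
      _ ≤ ENNReal.ofReal (T * ‖ωbar - ωs‖ + ‖ωbars - ωs‖)
            + ENNReal.ofReal α * ENNReal.ofReal σ := by gcongr
      _ = ENNReal.ofReal (T * ‖ωbar - ωs‖ + ‖ωbars - ωs‖ + α * σ) := by
          rw [← ENNReal.ofReal_mul hα.le,
            ← ENNReal.ofReal_add (by positivity) (mul_nonneg hα.le hσ)]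
  set C1 : ℝ := T * ‖ωbar - ωs‖ + ‖ωbars - ωs‖ + α * σ with hC1def
  have hC1 : 0 ≤ C1 := by positivity
  -- full induction
  have hiter : ∀ j, j + 1 ≤ k →
      ∫⁻ x, (‖ω (j+1) x - ωbars‖₊ : ENNReal) ∂P
        ≤ ENNReal.ofReal (ρ ^ j * C1 + (∑ i ∈ Finset.range j, ρ ^ i) * (α * σ)) := by
    intro j
    induction j with
    | zero => intro _; simpa using hL1
    | succ j ih =>
      intro h
      have hj1k : j + 1 < k := Nat.lt_of_succ_le h
      have hBnn : 0 ≤ ρ ^ j * C1 + (∑ i ∈ Finset.range j, ρ ^ i) * (α * σ) :=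
        add_nonneg (mul_nonneg (pow_nonneg hρ0 _) hC1)
          (mul_nonneg (Finset.sum_nonneg fun i _ => pow_nonneg hρ0 i)
            (mul_nonneg hα.le hσ))
      calc ∫⁻ x, (‖ω (j+1+1) x - ωbars‖₊ : ENNReal) ∂P
          ≤ ENNReal.ofReal ρ * ∫⁻ x, (‖ω (j+1) x - ωbars‖₊ : ENNReal) ∂P
              + ENNReal.ofReal (α * σ) := hL2step (j+1) hj1k
        _ ≤ ENNReal.ofReal ρ
              * ENNReal.ofReal (ρ ^ j * C1 + (∑ i ∈ Finset.range j, ρ ^ i) * (α * σ))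
              + ENNReal.ofReal (α * σ) := by
            gcongr
            exact ih hj1k.le
        _ = ENNReal.ofReal (ρ ^ (j+1) * C1 + (∑ i ∈ Finset.range (j+1), ρ ^ i) * (α * σ)) := by
            rw [← ENNReal.ofReal_mul hρ0, ← ENNReal.ofReal_add (by positivity)
              (mul_nonneg hα.le hσ)]
            congr 1
            rw [geom_sum_succ]
            ring
  -- conclude
  obtain ⟨m, rfl⟩ : ∃ m, k = m + 1 := ⟨k - 1, (Nat.succ_pred_eq_of_pos hk).symm⟩
  have hLk := hiter m le_rfl
  have hmeask : Measurable (ω (m+1)) := hmeasω _ le_rfl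
  have hB : 0 ≤ ρ ^ m * C1 + (∑ i ∈ Finset.range m, ρ ^ i) * (α * σ) :=
    add_nonneg (mul_nonneg (pow_nonneg hρ0 _) hC1)
      (mul_nonneg (Finset.sum_nonneg fun i _ => pow_nonneg hρ0 i) (mul_nonneg hα.le hσ))
  have hfinal : ∫⁻ x, ENNReal.ofReal ‖ω (m+1) x - ωs‖ ∂P
      ≤ ENNReal.ofReal (ρ ^ m * C1 + (∑ i ∈ Finset.range m, ρ ^ i) * (α * σ)
        + ‖ωbars - ωs‖) := by
    calc ∫⁻ x, ENNReal.ofReal ‖ω (m+1) x - ωs‖ ∂P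
        ≤ ∫⁻ x, ((‖ω (m+1) x - ωbars‖₊ : ENNReal) + ENNReal.ofReal ‖ωbars - ωs‖) ∂P := by
          apply lintegral_mono
          intro x
          dsimp only
          rw [← enorm_eq_nnnorm, ← ofReal_norm,
            ← ENNReal.ofReal_add (norm_nonneg _) (norm_nonneg _)]
          refine ENNReal.ofReal_le_ofReal ?_
          simpa [dist_eq_norm] using dist_triangle (ω (m+1) x) ωbars ωs
      _ = (∫⁻ x, (‖ω (m+1) x - ωbars‖₊ : ENNReal) ∂P) + ENNReal.ofReal ‖ωbars - ωs‖ := by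
          rw [lintegral_add_right _ measurable_const, lintegral_const]
          simp
      _ ≤ ENNReal.ofReal (ρ ^ m * C1 + (∑ i ∈ Finset.range m, ρ ^ i) * (α * σ))
            + ENNReal.ofReal ‖ωbars - ωs‖ := by gcongr
      _ = ENNReal.ofReal (ρ ^ m * C1 + (∑ i ∈ Finset.range m, ρ ^ i) * (α * σ)
            + ‖ωbars - ωs‖) := (ENNReal.ofReal_add hB (norm_nonneg _)).symm
  have heq : ρ ^ m * C1 + (∑ i ∈ Finset.range m, ρ ^ i) * (α * σ) + ‖ωbars - ωs‖
      = ρ ^ ((m+1) - 1) * T * ‖ωbar - ωs‖ + (1 + ρ ^ ((m+1) - 1)) * ‖ωbars - ωs‖ +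
        (∑ i ∈ Finset.range (m+1), ρ ^ i) * (α * σ) := by
    simp only [Nat.add_sub_cancel, hC1def, Finset.sum_range_succ]
    ring
  rw [integral_eq_lintegral_of_nonneg_ae (ae_of_all _ fun x => norm_nonneg _)
    ((hmeask.sub_const ωs).norm).aestronglyMeasurable]
  rw [heq] at hfinal
  exact ENNReal.toReal_le_of_le_ofReal (heq ▸ add_nonneg hB (norm_nonneg _)) hfinal

end
end

section
/- Let (Ω, F, P) be a probability space, n a natural number, γ ≥ 0, and let φ, φ′ : Ω → EuclideanSpace ℝ (Fin n) be random feature vectors such that ⟨φ, ω⟩ and ⟨φ′, ω⟩ are square-integrable for every ω. Suppose the low-distribution-shift condition holds: for every nonzero ω ∈ EuclideanSpace ℝ (Fin n), γ·√(E[⟨φ′, ω⟩²]) < √(E[⟨φ, ω⟩²]). Then for every nonzero ω, γ·E[⟨φ′, ω⟩·⟨φ, ω⟩] − E[⟨φ, ω⟩²] < 0; that is, the quadratic form of the linear TD Jacobian γΦ′ − Φ is strictly negative, where Φ = E[φφᵀ] and Φ′ = E[φ′φᵀ]. -/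
open MeasureTheory
open scoped RealInnerProductSpace

/-- Cauchy–Schwarz for integrals of real functions in L². -/
lemma integral_mul_le_sqrt_mul_sqrt {Ω : Type*} [MeasurableSpace Ω] (P : Measure Ω)
    (f g : Ω → ℝ) (hf : MemLp f 2 P) (hg : MemLp g 2 P) :
    ∫ x, f x * g x ∂P ≤ Real.sqrt (∫ x, f x ^ 2 ∂P) * Real.sqrt (∫ x, g x ^ 2 ∂P) := by
  set F : Lp ℝ 2 P := hf.toLp f
  set G : Lp ℝ 2 P := hg.toLp g
  have hFf : (F : Ω → ℝ) =ᵐ[P] f := hf.coeFn_toLp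
  have hGg : (G : Ω → ℝ) =ᵐ[P] g := hg.coeFn_toLp
  have hinner : ⟪F, G⟫ = ∫ x, f x * g x ∂P := by
    rw [L2.inner_def]
    refine integral_congr_ae ?_
    filter_upwards [hFf, hGg] with x hx hy
    simp [hx, hy, mul_comm]
  have hnF : ‖F‖ = Real.sqrt (∫ x, f x ^ 2 ∂P) := by
    rw [@norm_eq_sqrt_re_inner ℝ, L2.inner_def]
    congr 1
    refine integral_congr_ae ?_
    filter_upwards [hFf] with x hx
    simp [hx, sq]
  have hnG : ‖G‖ = Real.sqrt (∫ x, g x ^ 2 ∂P) := by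
    rw [@norm_eq_sqrt_re_inner ℝ, L2.inner_def]
    congr 1
    refine integral_congr_ae ?_
    filter_upwards [hGg] with x hx
    simp [hx, sq]
  calc ∫ x, f x * g x ∂P = ⟪F, G⟫ := hinner.symm
    _ ≤ ‖F‖ * ‖G‖ := real_inner_le_norm F G
    _ = _ := by rw [hnF, hnG]

/-- low distribution shift implies TD stability, Appendix A.1 of the
paper: if for every nonzero `ω` the low-distribution-shift condition
`γ·√(E[⟨φ′, ω⟩²]) < √(E[⟨φ, ω⟩²])` holds, then the quadratic form of the linear TD
Jacobian `γΦ′ − Φ` is strictly negative: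
`γ·E[⟨φ′, ω⟩·⟨φ, ω⟩] − E[⟨φ, ω⟩²] < 0` for every nonzero `ω`. -/
theorem low_shift_implies_td_stability {n : ℕ} {Ω : Type*} [MeasurableSpace Ω]
    (P : Measure Ω) [IsProbabilityMeasure P]
    (γ : ℝ) (hγ : 0 ≤ γ)
    (φ φ' : Ω → EuclideanSpace ℝ (Fin n))
    (hφ : ∀ ω : EuclideanSpace ℝ (Fin n), MemLp (fun x => ⟪φ x, ω⟫) 2 P)
    (hφ' : ∀ ω : EuclideanSpace ℝ (Fin n), MemLp (fun x => ⟪φ' x, ω⟫) 2 P)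
    (hshift : ∀ ω : EuclideanSpace ℝ (Fin n), ω ≠ 0 →
      γ * Real.sqrt (∫ x, ⟪φ' x, ω⟫ ^ 2 ∂P) < Real.sqrt (∫ x, ⟪φ x, ω⟫ ^ 2 ∂P)) :
    ∀ ω : EuclideanSpace ℝ (Fin n), ω ≠ 0 →
      γ * (∫ x, ⟪φ' x, ω⟫ * ⟪φ x, ω⟫ ∂P) - (∫ x, ⟪φ x, ω⟫ ^ 2 ∂P) < 0 := by
  intro ω hω
  set f : Ω → ℝ := fun x => ⟪φ' x, ω⟫
  set g : Ω → ℝ := fun x => ⟪φ x, ω⟫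
  have hCS := integral_mul_le_sqrt_mul_sqrt P f g (hφ' ω) (hφ ω)
  have hs := hshift ω hω
  have hsg : (0:ℝ) ≤ Real.sqrt (∫ x, g x ^ 2 ∂P) := Real.sqrt_nonneg _
  have hsgpos : 0 < Real.sqrt (∫ x, g x ^ 2 ∂P) :=
    lt_of_le_of_lt (mul_nonneg hγ (Real.sqrt_nonneg _)) hs
  have hint : (0:ℝ) ≤ ∫ x, g x ^ 2 ∂P := integral_nonneg fun x => sq_nonneg _
  have : γ * ∫ x, f x * g x ∂P < ∫ x, g x ^ 2 ∂P := by
    calc γ * ∫ x, f x * g x ∂P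
        ≤ γ * (Real.sqrt (∫ x, f x ^ 2 ∂P) * Real.sqrt (∫ x, g x ^ 2 ∂P)) :=
          mul_le_mul_of_nonneg_left hCS hγ
      _ = (γ * Real.sqrt (∫ x, f x ^ 2 ∂P)) * Real.sqrt (∫ x, g x ^ 2 ∂P) := by ring
      _ < Real.sqrt (∫ x, g x ^ 2 ∂P) * Real.sqrt (∫ x, g x ^ 2 ∂P) :=
          mul_lt_mul_of_pos_right hs hsgpos
      _ = ∫ x, g x ^ 2 ∂P := Real.mul_self_sqrt hint
  linarith
end
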